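/- arXiv:1403.5921 — 2 statements merged into one kernel-verified Lean document; each statement's English description precedes it below -/
import Mathlib

section
/- Let B = S/(f_1,...,f_n), l ∈ S_1 regular on B, J = (f_0,...,f_n). If the multiplication map f_0 : (B/(l))_{e-d_0} → (B/(l))_e is injective for some e, then the multiplication map l : (S/J)_{e-1} → (S/J)_e is injective. -/
open MvPolynomial Polynomial

attribute [local instance] MvPolynomial.gradedAlgebra

/-- The dimension over `K` of the degree `p` graded piece of `S ⧸ J`. -/
noncomputable def hilbFn {n : ℕ} {K : Type} [Field K]
    (J : Ideal (MvPolynomial (Fin (n + 1)) K)) (p : ℕ) : ℕ :=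
  Module.finrank K
    ((homogeneousSubmodule (Fin (n + 1)) K p).map (Ideal.Quotient.mkₐ K J).toLinearMap)

/-- The Hilbert series of `S ⧸ J` as a power series over `ℤ`. -/
noncomputable def hilbSeries {n : ℕ} {K : Type} [Field K]
    (J : Ideal (MvPolynomial (Fin (n + 1)) K)) : PowerSeries ℤ :=
  PowerSeries.mk fun p => (hilbFn J p : ℤ)

/-- The saturation `(J : 𝔪^∞)` of `J` with respect to the irrelevant ideal
`𝔪 = (x_0, …, x_n)`. -/
noncomputable def idealSaturation {n : ℕ} {K : Type} [Field K]
    (J : Ideal (MvPolynomial (Fin (n + 1)) K)) : Ideal (MvPolynomial (Fin (n + 1)) K) :=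
  ⨆ k : ℕ, J.colon (((Ideal.span (Set.range (X : Fin (n + 1) → MvPolynomial (Fin (n + 1)) K))) ^ k : Ideal (MvPolynomial (Fin (n + 1)) K)) : Set (MvPolynomial (Fin (n + 1)) K))

/-- The degree `z` graded piece of `S ⧸ W`, for an integer `z` (zero in negative degrees). -/
noncomputable def quotPieceZ {n : ℕ} {K : Type} [Field K]
    (W : Ideal (MvPolynomial (Fin (n + 1)) K)) (z : ℤ) :
    Submodule K (MvPolynomial (Fin (n + 1)) K ⧸ W) :=
  if 0 ≤ z then
    (homogeneousSubmodule (Fin (n + 1)) K z.toNat).map (Ideal.Quotient.mkₐ K W).toLinearMap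
  else ⊥
theorem mul_l_injective_of_mul_f0_injective {n : ℕ} {K : Type} [Field K] [CharZero K]
    (f : Fin (n + 1) → MvPolynomial (Fin (n + 1)) K) (d : Fin (n + 1) → ℕ)
    (hhom : ∀ i, (f i).IsHomogeneous (d i))
    (hreg : RingTheory.Sequence.IsRegular (MvPolynomial (Fin (n + 1)) K)
      (List.ofFn fun i : Fin n => f i.succ))
    (l : MvPolynomial (Fin (n + 1)) K) (hl : l.IsHomogeneous 1)
    (hlreg : Ideal.Quotient.mk (Ideal.span (Set.range fun i : Fin n => f i.succ)) l ∈
      nonZeroDivisors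
        (MvPolynomial (Fin (n + 1)) K ⧸ Ideal.span (Set.range fun i : Fin n => f i.succ)))
    (e : ℕ)
    -- multiplication by `f₀ : (B/(l))_{e-d₀} → (B/(l))_e` is injective
    (hinj : ∀ x ∈ quotPieceZ
        (Ideal.span (Set.range fun i : Fin n => f i.succ) ⊔ Ideal.span {l}) ((e : ℤ) - d 0),
      Ideal.Quotient.mk
          (Ideal.span (Set.range fun i : Fin n => f i.succ) ⊔ Ideal.span {l}) (f 0) * x = 0 →
        x = 0) :
    -- then multiplication by `l : (S/J)_{e-1} → (S/J)_e` is injective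
    ∀ x ∈ quotPieceZ (Ideal.span (Set.range f)) ((e : ℤ) - 1),
      Ideal.Quotient.mk (Ideal.span (Set.range f)) l * x = 0 → x = 0 := by
  classical
  set 𝒜 := homogeneousSubmodule (Fin (n + 1)) K with h𝒜
  set I : Ideal (MvPolynomial (Fin (n + 1)) K) := Ideal.span (Set.range fun i : Fin n => f i.succ) with hIdef
  set J : Ideal (MvPolynomial (Fin (n + 1)) K) := Ideal.span (Set.range f) with hJdef
  have hIJ : I ≤ J := Ideal.span_mono (by rintro _ ⟨i, rfl⟩; exact ⟨i.succ, rfl⟩)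
  have hf0J : f 0 ∈ J := Ideal.subset_span ⟨0, rfl⟩
  -- homogeneity of I
  have hIhom : I.IsHomogeneous 𝒜 :=
    Ideal.homogeneous_span _ _ (by rintro _ ⟨i, rfl⟩; exact ⟨d i.succ, (mem_homogeneousSubmodule _ _).mpr (hhom i.succ)⟩)
  -- l is a nonzerodivisor mod I
  have hlnzd : ∀ y : MvPolynomial (Fin (n + 1)) K, l * y ∈ I → y ∈ I := by
    intro y hy
    have h0 : Ideal.Quotient.mk I y * Ideal.Quotient.mk I l = 0 := by
      rw [← map_mul, mul_comm, Ideal.Quotient.eq_zero_iff_mem]; exact hy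
    have := mem_nonZeroDivisors_iff_right.mp hlreg _ h0
    rwa [Ideal.Quotient.eq_zero_iff_mem] at this
  intro x hx hmul
  by_cases he : (0 : ℤ) ≤ (e : ℤ) - 1
  · have he1 : 1 ≤ e := by omega
    rw [quotPieceZ, if_pos he] at hx
    obtain ⟨g, hg, rfl⟩ := hx
    have hgh : g.IsHomogeneous (((e : ℤ) - 1).toNat) := hg
    have hmkg : (Ideal.Quotient.mkₐ K J).toLinearMap g = Ideal.Quotient.mk J g := rfl
    rw [hmkg] at hmul ⊢
    rw [Ideal.Quotient.eq_zero_iff_mem]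
    -- l * g ∈ J
    have hlg : l * g ∈ J := by
      rw [← Ideal.Quotient.eq_zero_iff_mem, map_mul]; exact hmul
    -- split off the f 0 part
    have hlg' : l * g ∈ Ideal.span (insert (f 0) (Set.range (Fin.tail f))) := by
      rwa [← Fin.range_fin_succ]
    obtain ⟨a, r, hrI, hsum⟩ := Ideal.mem_span_insert.mp hlg'
    have hrI : r ∈ I := hrI
    -- l * g is homogeneous of degree e
    have hlgh : (l * g) ∈ 𝒜 e := by
      have := hl.mul hgh
      rw [mem_homogeneousSubmodule]
      convert this using 1
      omega
    -- take the degree-e component of hsum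
    have hdec := congrArg (fun y : MvPolynomial (Fin (n + 1)) K => (DirectSum.decompose 𝒜 y e : MvPolynomial (Fin (n + 1)) K)) hsum
    simp only [DirectSum.decompose_add, DirectSum.add_apply, Submodule.coe_add] at hdec
    rw [DirectSum.decompose_of_mem_same 𝒜 hlgh] at hdec
    have hre : (DirectSum.decompose 𝒜 r e : MvPolynomial (Fin (n + 1)) K) ∈ I := hIhom e hrI
    have hf0m : f 0 ∈ 𝒜 (d 0) := hhom 0
    by_cases hde : d 0 ≤ e
    · -- main case
      rw [DirectSum.coe_decompose_mul_of_right_mem_of_le 𝒜 hf0m hde] at hdec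
      set h' : MvPolynomial (Fin (n + 1)) K := (DirectSum.decompose 𝒜 a (e - d 0) : MvPolynomial (Fin (n + 1)) K) with hh'
      set W : Ideal (MvPolynomial (Fin (n + 1)) K) := I ⊔ Ideal.span {l} with hW
      have hlW : l ∈ W := (le_sup_right : Ideal.span {l} ≤ W) (Ideal.mem_span_singleton_self l)
      -- h' maps into the right graded piece of S/W
      have hmem : Ideal.Quotient.mk W h' ∈ quotPieceZ W ((e : ℤ) - d 0) := by
        rw [quotPieceZ, if_pos (by omega : (0:ℤ) ≤ (e : ℤ) - d 0)]
        refine ⟨h', ?_, rfl⟩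
        have : ((e : ℤ) - d 0).toNat = e - d 0 := by omega
        rw [this]
        exact (DirectSum.decompose 𝒜 a (e - d 0)).2
      -- f 0 * h' = 0 in S/W
      have hzero : Ideal.Quotient.mk W (f 0) * Ideal.Quotient.mk W h' = 0 := by
        rw [← map_mul, Ideal.Quotient.eq_zero_iff_mem]
        have : f 0 * h' = l * g - (DirectSum.decompose 𝒜 r e : MvPolynomial (Fin (n + 1)) K) := by
          rw [hdec]; ring
        rw [this]
        exact sub_mem (Ideal.mul_mem_right g W hlW) (le_sup_left (α := Ideal (MvPolynomial (Fin (n + 1)) K)) hre)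
      have hW0 := hinj _ hmem hzero
      rw [Ideal.Quotient.eq_zero_iff_mem] at hW0
      obtain ⟨y, hyI, z, hz, hyz⟩ := Submodule.mem_sup.mp hW0
      obtain ⟨c, hc⟩ := Ideal.mem_span_singleton'.mp hz
      -- l * (g - c * f 0) ∈ I
      have hkey : l * (g - c * f 0) ∈ I := by
        have : l * (g - c * f 0) = y * f 0 + (DirectSum.decompose 𝒜 r e : MvPolynomial (Fin (n + 1)) K) := by
          have h1 : l * g = h' * f 0 + (DirectSum.decompose 𝒜 r e : MvPolynomial (Fin (n + 1)) K) := hdec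
          have h2 : h' = y + c * l := by rw [← hyz, ← hc]
          rw [mul_sub, h1, h2]; ring
        rw [this]
        exact add_mem (Ideal.mul_mem_right _ I hyI) hre
      have hgI : g - c * f 0 ∈ I := hlnzd _ hkey
      have : g = (g - c * f 0) + c * f 0 := by ring
      rw [this]
      exact add_mem (hIJ hgI) (Ideal.mul_mem_left J c hf0J)
    · -- degenerate case: e < d 0
      rw [DirectSum.coe_decompose_mul_of_right_mem_of_not_le 𝒜 hf0m hde, zero_add] at hdec
      have : l * g ∈ I := hdec ▸ hre
      exact hIJ (hlnzd g this)
  · rw [quotPieceZ, if_neg he] at hx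
    simpa using hx
end

section
/- Let f ∈ S = K[x_0,...,x_n] be homogeneous of degree d defining a hypersurface V with only isolated singularities, and suppose f_0 lies in the ideal generated by the other partial derivatives f_1,...,f_n of f. Then, after a linear change of coordinates, f is a polynomial in x_1,...,x_n only; equivalently, f_0 lies in the K-vector space spanned by f_1,...,f_n. -/
open MvPolynomial Polynomial

attribute [local instance] MvPolynomial.gradedAlgebra

section ConeAux

variable {K : Type} [Field K]

lemma degAdd {σ : Type*} (a b : σ →₀ ℕ) :
    (a + b).degree = a.degree + b.degree := by
  simp [Finsupp.degree_eq_weight_one]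

lemma degSingle {σ : Type*} (j : σ) (k : ℕ) : (Finsupp.single j k).degree = k := by
  classical
  rcases eq_or_ne k 0 with rfl | h
  · simp [Finsupp.degree]
  · simp [Finsupp.degree_apply, Finsupp.support_single_ne_zero _ h]

lemma isHomog_pderiv {σ : Type*} {f : MvPolynomial σ K} {d : ℕ}
    (hf : f.IsHomogeneous d) (j : σ) : (pderiv j f).IsHomogeneous (d - 1) := by
  classical
  conv_lhs => rw [f.as_sum]
  rw [map_sum]
  apply MvPolynomial.IsHomogeneous.sum
  intro m hm
  rw [pderiv_monomial]
  by_cases h : m j = 0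
  · rw [h]
    simpa using MvPolynomial.isHomogeneous_zero σ K (d - 1)
  · apply isHomogeneous_monomial
    have hd : m.degree = d := by
      rw [Finsupp.degree_eq_weight_one]
      exact hf (MvPolynomial.mem_support_iff.mp hm)
    have hle : Finsupp.single j 1 ≤ m := by
      rw [Finsupp.single_le_iff]; omega
    have h2 : (m - Finsupp.single j 1) + Finsupp.single j 1 = m := tsub_add_cancel_of_le hle
    have h3 := congrArg Finsupp.degree h2
    rw [degAdd, degSingle] at h3
    omega

lemma homogComp_mul_right {σ : Type*} (g F : MvPolynomial σ K) {e : ℕ}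
    (hF : F.IsHomogeneous e) :
    homogeneousComponent e (g * F) = MvPolynomial.C (MvPolynomial.coeff 0 g) * F := by
  classical
  ext m
  rw [coeff_homogeneousComponent, MvPolynomial.coeff_C_mul]
  by_cases hm : m.degree = e
  · rw [if_pos hm, MvPolynomial.coeff_mul]
    refine Finset.sum_eq_single_of_mem (0, m) ?_ ?_
    · rw [Finset.HasAntidiagonal.mem_antidiagonal]; simp
    · rintro ⟨a, b⟩ hab hne
      rw [Finset.HasAntidiagonal.mem_antidiagonal] at hab
      have hab' : a + b = m := hab
      have hb : b.degree ≠ e := by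
        intro hbe
        have h3 : a.degree + b.degree = m.degree := by rw [← degAdd, hab']
        have ha0 : a.degree = 0 := by rw [hbe, hm] at h3; omega
        rw [Finsupp.degree_eq_zero_iff] at ha0
        apply hne
        subst ha0
        rw [zero_add] at hab'
        rw [hab']
      rw [hF.coeff_eq_zero hb, mul_zero]
  · rw [if_neg hm, hF.coeff_eq_zero hm, mul_zero]

lemma coeff_pderiv {σ : Type*} [DecidableEq σ] (j : σ) (m : σ →₀ ℕ) (p : MvPolynomial σ K) :
    MvPolynomial.coeff m (pderiv j p) =
      ((m j : K) + 1) * MvPolynomial.coeff (m + Finsupp.single j 1) p := by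
  induction p using MvPolynomial.induction_on' with
  | add p q hp hq => simp [hp, hq, mul_add]
  | monomial m' a =>
    rw [pderiv_monomial, MvPolynomial.coeff_monomial, MvPolynomial.coeff_monomial]
    by_cases h : m' = m + Finsupp.single j 1
    · have hle : Finsupp.single j 1 ≤ m' := by
        rw [h, Finsupp.single_le_iff]; simp
      have h1 : m' - Finsupp.single j 1 = m := by
        rw [h]; exact add_tsub_cancel_right m _
      have h2 : m' j = m j + 1 := by rw [h]; simp
      rw [if_pos h1, if_pos h, h2]
      push_cast
      ring
    · rw [if_neg h]
      by_cases h0 : m' j = 0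
      · by_cases h1 : m' - Finsupp.single j 1 = m
        · rw [if_pos h1, h0]; simp
        · rw [if_neg h1]; simp
      · have h1 : m' - Finsupp.single j 1 ≠ m := by
          intro he
          apply h
          rw [← he, tsub_add_cancel_of_le]
          rw [Finsupp.single_le_iff]; omega
        rw [if_neg h1]; simp

lemma pderiv_aeval_self {σ : Type*} [Fintype σ] [DecidableEq σ]
    (u : σ → MvPolynomial σ K) (j : σ) (p : MvPolynomial σ K) :
    pderiv j (MvPolynomial.aeval u p) =
      ∑ i, MvPolynomial.aeval u (pderiv i p) * pderiv j (u i) := by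
  induction p using MvPolynomial.induction_on with
  | C a => simp
  | add p q hp hq =>
    simp only [map_add, hp, hq, add_mul, Finset.sum_add_distrib]
  | mul_X p i hp =>
    have hterm : ∀ k : σ, pderiv k (p * X i) =
        pderiv k p * X i + if k = i then p else 0 := by
      intro k
      rw [pderiv_mul]
      by_cases h : k = i
      · subst h; simp [pderiv_X_self, mul_comm]
      · simp [pderiv_X_of_ne (Ne.symm h), h]
    simp only [map_mul, MvPolynomial.aeval_X, pderiv_mul, hp, hterm, map_add, map_mul,
      MvPolynomial.aeval_X, add_mul, Finset.sum_add_distrib]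
    have h1 : ∑ k, MvPolynomial.aeval u (if k = i then p else 0) * pderiv j (u k)
        = MvPolynomial.aeval u p * pderiv j (u i) := by
      rw [Finset.sum_eq_single_of_mem i (Finset.mem_univ i)]
      · simp
      · intro b _ hb; simp [hb]
    rw [h1, Finset.sum_mul]
    congr 1
    exact Finset.sum_congr rfl fun k _ => by ring

end ConeAux

theorem cone_over_smooth_hypersurface {n : ℕ} {K : Type} [Field K] [CharZero K]
    (f : MvPolynomial (Fin (n + 1)) K) (dd : ℕ) (hf : f.IsHomogeneous dd)
    -- `V : f = 0` has only isolated singularities, i.e. `dim S/J_f = 1`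
    (hdim : ringKrullDim (MvPolynomial (Fin (n + 1)) K ⧸
      Ideal.span (Set.range fun i : Fin (n + 1) => pderiv i f)) = 1)
    -- `f₀` lies in the ideal generated by the other partial derivatives
    (hmem : pderiv 0 f ∈ Ideal.span (Set.range fun i : Fin n => pderiv i.succ f)) :
    -- `f₀` lies in the `K`-vector space spanned by `f_1, …, f_n`, and after a linear
    -- change of coordinates `f` is a polynomial in `x_1, …, x_n` only
    pderiv 0 f ∈ Submodule.span K (Set.range fun i : Fin n => pderiv i.succ f) ∧
    ∃ lin : Fin (n + 1) → MvPolynomial (Fin (n + 1)) K,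
      (∀ i, (lin i).IsHomogeneous 1) ∧
      Function.Bijective (MvPolynomial.aeval (R := K) lin) ∧
      ∃ g : MvPolynomial (Fin n) K,
        MvPolynomial.rename (Fin.succ : Fin n → Fin (n + 1)) g = MvPolynomial.aeval lin f := by
  classical
  obtain ⟨g, hg⟩ := Ideal.mem_span_range_iff_exists_fun.mp hmem
  set e := dd - 1 with he
  have hpd : ∀ j : Fin (n + 1), (pderiv j f).IsHomogeneous e := fun j => isHomog_pderiv hf j
  set c : Fin n → K := fun i => MvPolynomial.coeff 0 (g i) with hc
  have key : pderiv 0 f = ∑ i : Fin n, MvPolynomial.C (c i) * pderiv i.succ f := by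
    have hR : homogeneousComponent e (pderiv 0 f) = pderiv 0 f := by
      rw [homogeneousComponent_of_mem (hpd 0), if_pos rfl]
    calc pderiv 0 f = homogeneousComponent e (∑ i : Fin n, g i * pderiv i.succ f) := by
          rw [hg, hR]
      _ = ∑ i : Fin n, MvPolynomial.C (c i) * pderiv i.succ f := by
          rw [map_sum]
          exact Finset.sum_congr rfl fun i _ => homogComp_mul_right _ _ (hpd i.succ)
  constructor
  · rw [Submodule.mem_span_range_iff_exists_fun]
    refine ⟨c, ?_⟩
    rw [key]
    exact Finset.sum_congr rfl fun i _ => by rw [MvPolynomial.smul_eq_C_mul]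
  · set lin : Fin (n + 1) → MvPolynomial (Fin (n + 1)) K :=
      fun j => Fin.cases (X 0) (fun i => X i.succ - MvPolynomial.C (c i) * X 0) j with hlin
    set lin' : Fin (n + 1) → MvPolynomial (Fin (n + 1)) K :=
      fun j => Fin.cases (X 0) (fun i => X i.succ + MvPolynomial.C (c i) * X 0) j with hlin'
    have hli : ∀ j, MvPolynomial.aeval lin' (lin j) = X j := by
      intro j
      induction j using Fin.cases with
      | zero => simp [hlin, hlin']
      | succ i => simp [hlin, hlin']
    have hli' : ∀ j, MvPolynomial.aeval lin (lin' j) = X j := by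
      intro j
      induction j using Fin.cases with
      | zero => simp [hlin, hlin']
      | succ i => simp [hlin, hlin']
    have hcomp : ∀ p, MvPolynomial.aeval lin' (MvPolynomial.aeval lin p) = p := by
      intro p
      rw [← AlgHom.comp_apply, MvPolynomial.comp_aeval,
        show (fun i => MvPolynomial.aeval lin' (lin i)) = MvPolynomial.X from funext hli,
        MvPolynomial.aeval_X_left_apply]
    have hcomp' : ∀ p, MvPolynomial.aeval lin (MvPolynomial.aeval lin' p) = p := by
      intro p
      rw [← AlgHom.comp_apply, MvPolynomial.comp_aeval,
        show (fun i => MvPolynomial.aeval lin (lin' i)) = MvPolynomial.X from funext hli',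
        MvPolynomial.aeval_X_left_apply]
    refine ⟨lin, ?_, ⟨Function.LeftInverse.injective hcomp,
        fun p => ⟨MvPolynomial.aeval lin' p, hcomp' p⟩⟩, ?_⟩
    · intro j
      induction j using Fin.cases with
      | zero => simpa [hlin] using isHomogeneous_X K (0 : Fin (n + 1))
      | succ i =>
        simp only [hlin, Fin.cases_succ]
        exact (isHomogeneous_X K _).sub ((isHomogeneous_X K _).C_mul (c i))
    · set F := MvPolynomial.aeval lin f with hF
      have t0 : pderiv (0 : Fin (n + 1)) (lin 0) = 1 := by simp [hlin]
      have ts : ∀ i : Fin n, pderiv (0 : Fin (n + 1)) (lin i.succ) = -MvPolynomial.C (c i) := by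
        intro i
        simp [hlin, pderiv_X_of_ne (Fin.succ_ne_zero i), pderiv_C_mul]
      have hd0 : pderiv 0 F = 0 := by
        rw [hF, pderiv_aeval_self, Fin.sum_univ_succ, t0, key, mul_one, map_sum,
          ← Finset.sum_add_distrib]
        refine Finset.sum_eq_zero fun i _ => ?_
        rw [ts, map_mul, MvPolynomial.aeval_C, MvPolynomial.algebraMap_eq]
        ring
      have hco : ∀ m : Fin (n + 1) →₀ ℕ, m 0 ≠ 0 → MvPolynomial.coeff m F = 0 := by
        intro m hm0
        set m' : Fin (n + 1) →₀ ℕ := m - Finsupp.single 0 1 with hm'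
        have h1 := coeff_pderiv (0 : Fin (n + 1)) m' F
        rw [hd0, MvPolynomial.coeff_zero] at h1
        have hle : Finsupp.single (0 : Fin (n + 1)) 1 ≤ m := by
          rw [Finsupp.single_le_iff]; omega
        rw [hm', tsub_add_cancel_of_le hle] at h1
        have hne : ((m' 0 : ℕ) : K) + 1 ≠ 0 := by
          have h2 : (((m' 0 : ℕ) + 1 : ℕ) : K) ≠ 0 :=
            Nat.cast_ne_zero.mpr (Nat.succ_ne_zero _)
          push_cast at h2
          exact h2
        rcases mul_eq_zero.mp h1.symm with h | h
        · exact absurd h hne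
        · exact h
      set u : Fin (n + 1) → MvPolynomial (Fin n) K :=
        fun j => Fin.cases 0 (fun i => X i) j with hu
      refine ⟨MvPolynomial.aeval u F, ?_⟩
      rw [← AlgHom.comp_apply, MvPolynomial.comp_aeval]
      have hv : ∀ i : Fin n, MvPolynomial.rename (Fin.succ : Fin n → Fin (n + 1)) (u i.succ)
          = X i.succ := by intro i; simp [hu]
      have hv0 : MvPolynomial.rename (Fin.succ : Fin n → Fin (n + 1)) (u 0) = 0 := by
        simp [hu]
      conv_lhs => rw [F.as_sum]
      rw [map_sum]
      conv_rhs => rw [F.as_sum]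
      refine Finset.sum_congr rfl fun m hm => ?_
      have hm0 : m 0 = 0 := by
        by_contra h
        exact MvPolynomial.mem_support_iff.mp hm (hco m h)
      rw [MvPolynomial.aeval_monomial, MvPolynomial.algebraMap_eq]
      conv_rhs => rw [MvPolynomial.monomial_eq]
      congr 1
      apply Finsupp.prod_congr
      intro j hj
      have hj0 : j ≠ 0 := by
        intro h
        rw [h] at hj
        exact (Finsupp.mem_support_iff.mp hj) hm0
      congr 1
      induction j using Fin.cases with
      | zero => exact absurd rfl hj0
      | succ i => exact hv i
end
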